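/- Suppose X = Y and c(x,y) = d(x,y) is the metric of X. Let (β_n) be a sequence of positive reals with β_n → +∞, and for each n let (φ_n, ψ_n) be a pair of β_n-potentials. If φ_n/β_n converges uniformly to φ : X → ℝ (and ψ_n/β_n converges uniformly to some ψ), then Lip(φ) ≤ 1 and ∫ φ dμ − ∫ φ dν = α(c); that is, φ solves the Kantorovich–Rubinstein dual problem. -/

import Mathlib

open MeasureTheory Filter
open scoped ENNReal NNReal

open Classical in
noncomputable def negKL {X Y : Type*} [MeasurableSpace X] [MeasurableSpace Y]
    (μ : Measure X) (ν : Measure Y) (π : Measure (X × Y)) : EReal :=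
  if π ≪ μ.prod ν ∧ Integrable (llr π (μ.prod ν)) π
  then ((- ∫ p, llr π (μ.prod ν) p ∂π : ℝ) : EReal)
  else ⊥

def IsPlan {X Y : Type*} [MeasurableSpace X] [MeasurableSpace Y]
    (μ : Measure X) (ν : Measure Y) (π : Measure (X × Y)) : Prop :=
  IsProbabilityMeasure π ∧ π.map Prod.fst = μ ∧ π.map Prod.snd = ν

noncomputable def pressure {X Y : Type*} [MeasurableSpace X] [MeasurableSpace Y]
    (μ : Measure X) (ν : Measure Y) (B : X × Y → ℝ) : EReal :=
  ⨆ π : {π : Measure (X × Y) // IsPlan μ ν π},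
    ((∫ p, B p ∂(π.1) : ℝ) : EReal) + negKL μ ν π.1

noncomputable def transportCost {X Y : Type*} [MeasurableSpace X] [MeasurableSpace Y]
    (μ : Measure X) (ν : Measure Y) (c : X × Y → ℝ) : ℝ :=
  ⨅ π : {π : Measure (X × Y) // IsPlan μ ν π}, ∫ p, c p ∂(π.1)

noncomputable def maxVal {X Y : Type*} [MeasurableSpace X] [MeasurableSpace Y]
    (μ : Measure X) (ν : Measure Y) (A : X × Y → ℝ) : ℝ :=
  ⨆ π : {π : Measure (X × Y) // IsPlan μ ν π}, ∫ p, A p ∂(π.1)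

noncomputable def Hmax {X Y : Type*} [MeasurableSpace X] [MeasurableSpace Y]
    (μ : Measure X) (ν : Measure Y) (A : X × Y → ℝ) : EReal :=
  ⨆ π : {π : Measure (X × Y) // IsPlan μ ν π ∧ ∫ p, A p ∂π = maxVal μ ν A},
    negKL μ ν π.1

lemma contInt {Z : Type*} [TopologicalSpace Z] [CompactSpace Z] [MeasurableSpace Z]
    [OpensMeasurableSpace Z] (m : Measure Z) [IsFiniteMeasure m] {f : Z → ℝ}
    (hf : Continuous f) : Integrable f m :=
  hf.integrable_of_hasCompactSupport (HasCompactSupport.of_compactSpace f)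

lemma tendstoIntegralOfTU {Z : Type*} [MeasurableSpace Z] (m : Measure Z)
    [IsProbabilityMeasure m] {fs : ℕ → Z → ℝ} {f : Z → ℝ}
    (hint : ∀ n, Integrable (fs n) m) (hintf : Integrable f m)
    (h : TendstoUniformly fs f atTop) :
    Tendsto (fun n => ∫ x, fs n x ∂m) atTop (nhds (∫ x, f x ∂m)) := by
  rw [Metric.tendsto_atTop]
  intro ε hε
  rw [Metric.tendstoUniformly_iff] at h
  obtain ⟨N, hN⟩ := (h (ε/2) (by linarith)).exists_forall_of_atTop
  refine ⟨N, fun n hn => ?_⟩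
  have key : |∫ x, fs n x ∂m - ∫ x, f x ∂m| ≤ ε/2 := by
    rw [← integral_sub (hint n) hintf]
    calc |∫ x, (fs n x - f x) ∂m|
        ≤ ∫ x, |fs n x - f x| ∂m := by
          simpa [Real.norm_eq_abs] using
            norm_integral_le_integral_norm (μ := m) (f := fun x => fs n x - f x)
      _ ≤ ∫ _x, (ε/2) ∂m := by
          refine integral_mono ((hint n).sub hintf).abs (integrable_const _) fun x => ?_
          rw [abs_sub_comm]
          exact le_of_lt (hN n hn x)
      _ = ε/2 := by simp
  rw [Real.dist_eq]
  linarith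

theorem stmt12
    {X : Type*}
    [MetricSpace X] [CompactSpace X] [MeasurableSpace X] [BorelSpace X]
    (μ : Measure X) [IsProbabilityMeasure μ] [μ.IsOpenPosMeasure]
    (ν : Measure X) [IsProbabilityMeasure ν] [ν.IsOpenPosMeasure]
    (c : X × X → ℝ) (hc : c = fun p => dist p.1 p.2)
    (A : X × X → ℝ) (hA : A = fun p => - c p)
    (βs : ℕ → ℝ) (hβpos : ∀ n, 0 < βs n) (hβtop : Tendsto βs atTop atTop)
    (φs ψs : ℕ → X → ℝ)
    (hφc : ∀ n, Continuous (φs n)) (hψc : ∀ n, Continuous (ψs n))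
    (h1 : ∀ n, ∀ y : X, ∫ x, Real.exp (βs n * A (x, y) + φs n x + ψs n y) ∂μ = 1)
    (h2 : ∀ n, ∀ x : X, ∫ y, Real.exp (βs n * A (x, y) + φs n x + ψs n y) ∂ν = 1)
    (φ ψ : X → ℝ)
    (hφ : TendstoUniformly (fun n x => φs n x / βs n) φ atTop)
    (hψ : TendstoUniformly (fun n y => ψs n y / βs n) ψ atTop) :
    (∀ x₁ x₂ : X, |φ x₁ - φ x₂| ≤ dist x₁ x₂) ∧
    ∫ x, φ x ∂μ - ∫ x, φ x ∂ν = transportCost μ ν c := by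
  have hA' : ∀ x y : X, A (x, y) = -(dist x y) := fun x y => by rw [hA, hc]
  have hcP : ∀ p : X × X, c p = dist p.1 p.2 := fun p => by rw [hc]
  have contA : Continuous A := by
    rw [hA, hc]; exact (continuous_fst.dist continuous_snd).neg
  -- integrand continuity
  have contE : ∀ n, Continuous (fun p : X × X =>
      Real.exp (βs n * A p + φs n p.1 + ψs n p.2)) := fun n =>
    Real.continuous_exp.comp (((continuous_const.mul contA).add
      ((hφc n).comp continuous_fst)).add ((hψc n).comp continuous_snd))
  have contEx : ∀ n (y : X), Continuous (fun x : X =>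
      Real.exp (βs n * A (x, y) + φs n x + ψs n y)) := fun n y =>
    (contE n).comp (continuous_id.prodMk continuous_const)
  have contEy : ∀ n (x : X), Continuous (fun y : X =>
      Real.exp (βs n * A (x, y) + φs n x + ψs n y)) := fun n x =>
    (contE n).comp (continuous_const.prodMk continuous_id)
  -- Step 1: Lipschitz bound for the potentials φs n
  have hLip : ∀ n (x₁ x₂ : X), φs n x₁ - φs n x₂ ≤ βs n * dist x₁ x₂ := by
    intro n x₁ x₂
    have hI : ∀ x : X, (∫ y, Real.exp (βs n * A (x, y) + ψs n y) ∂ν)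
        = Real.exp (-(φs n x)) := by
      intro x
      have hfac : Real.exp (φs n x) * ∫ y, Real.exp (βs n * A (x, y) + ψs n y) ∂ν = 1 := by
        rw [← integral_const_mul, ← h2 n x]
        congr 1; funext y; rw [← Real.exp_add]; ring_nf
      rw [Real.exp_neg]
      exact eq_inv_of_mul_eq_one_left (by rw [mul_comm]; exact hfac)
    have hmono : (∫ y, Real.exp (βs n * A (x₂, y) + ψs n y) ∂ν)
        ≤ Real.exp (βs n * dist x₁ x₂) * ∫ y, Real.exp (βs n * A (x₁, y) + ψs n y) ∂ν := by
      rw [← integral_const_mul]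
      have cont1 : Continuous (fun y : X => Real.exp (βs n * A (x₂, y) + ψs n y)) :=
        Real.continuous_exp.comp ((continuous_const.mul
          (contA.comp (continuous_const.prodMk continuous_id))).add (hψc n))
      have cont2 : Continuous (fun y : X =>
          Real.exp (βs n * dist x₁ x₂) * Real.exp (βs n * A (x₁, y) + ψs n y)) :=
        continuous_const.mul (Real.continuous_exp.comp ((continuous_const.mul
          (contA.comp (continuous_const.prodMk continuous_id))).add (hψc n)))
      refine integral_mono (contInt ν cont1) (contInt ν cont2) fun y => ?_
      rw [← Real.exp_add, Real.exp_le_exp, hA' x₂ y, hA' x₁ y]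
      have htri : dist x₁ y ≤ dist x₁ x₂ + dist x₂ y := dist_triangle x₁ x₂ y
      nlinarith [(hβpos n).le]
    rw [hI x₁, hI x₂, ← Real.exp_add, Real.exp_le_exp] at hmono
    linarith
  have hφpt : ∀ x, Tendsto (fun n => φs n x / βs n) atTop (nhds (φ x)) :=
    fun x => hφ.tendsto_at x
  have hψpt : ∀ y, Tendsto (fun n => ψs n y / βs n) atTop (nhds (ψ y)) :=
    fun y => hψ.tendsto_at y
  -- limit Lipschitz bound
  have hφLip : ∀ x₁ x₂ : X, φ x₁ - φ x₂ ≤ dist x₁ x₂ := by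
    intro x₁ x₂
    have htd : Tendsto (fun n => φs n x₁ / βs n - φs n x₂ / βs n) atTop
        (nhds (φ x₁ - φ x₂)) := (hφpt x₁).sub (hφpt x₂)
    refine le_of_tendsto htd (Eventually.of_forall fun n => ?_)
    have h := hLip n x₁ x₂
    have hb := hβpos n
    rw [div_sub_div_same, div_le_iff₀ hb]
    linarith
  have part1 : ∀ x₁ x₂ : X, |φ x₁ - φ x₂| ≤ dist x₁ x₂ := by
    intro x₁ x₂
    rw [abs_sub_le_iff]
    exact ⟨hφLip x₁ x₂, dist_comm x₁ x₂ ▸ hφLip x₂ x₁⟩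
  -- Step 4a : φ + ψ ≥ 0 pointwise
  have hge : ∀ y : X, 0 ≤ φ y + ψ y := by
    intro y
    have key : ∀ n, (0:ℝ) ≤ φs n y / βs n + ψs n y / βs n := by
      intro n
      have hb := hβpos n
      obtain ⟨x₀, hx₀⟩ := exists_integral_le (μ := μ) (contInt μ (contEx n y))
      rw [h1 n y] at hx₀
      have hx₀' : 0 ≤ βs n * A (x₀, y) + φs n x₀ + ψs n y := by
        have := Real.exp_le_exp.mp (by simpa [Real.exp_zero] using hx₀ :
          Real.exp 0 ≤ Real.exp (βs n * A (x₀, y) + φs n x₀ + ψs n y))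
        simpa using this
      rw [hA' x₀ y] at hx₀'
      have hl := hLip n x₀ y
      have hsum : 0 ≤ φs n y + ψs n y := by nlinarith
      rw [← add_div]
      exact div_nonneg hsum hb.le
    exact le_of_tendsto_of_tendsto' tendsto_const_nhds ((hφpt y).add (hψpt y)) key
  -- Step 4b : φ + ψ ≤ 0 pointwise
  have hle : ∀ y : X, φ y + ψ y ≤ 0 := by
    intro y
    have key : ∀ ε : ℝ, 0 < ε → φ y + ψ y ≤ 2 * ε := by
      intro ε hε
      set m : ℝ := (μ (Metric.ball y ε)).toReal with hm
      have hmpos : 0 < m := by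
        rw [hm]
        exact ENNReal.toReal_pos (Metric.measure_ball_pos μ y hε).ne' (measure_ne_top μ _)
      have bound : ∀ n, φs n y / βs n + ψs n y / βs n
          ≤ 2 * ε + (-Real.log m) / βs n := by
        intro n
        have hb := hβpos n
        have hintg : Integrable (fun x => Real.exp (βs n * A (x, y) + φs n x + ψs n y)) μ :=
          contInt μ (contEx n y)
        have h5 : Real.exp (φs n y + ψs n y - 2 * (βs n * ε)) * m ≤ 1 := by
          rw [← h1 n y]
          calc Real.exp (φs n y + ψs n y - 2 * (βs n * ε)) * m
              = ∫ _x in Metric.ball y ε, Real.exp (φs n y + ψs n y - 2 * (βs n * ε)) ∂μ := by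
                rw [setIntegral_const, smul_eq_mul, mul_comm]; rfl
            _ ≤ ∫ x in Metric.ball y ε,
                  Real.exp (βs n * A (x, y) + φs n x + ψs n y) ∂μ := by
                refine setIntegral_mono_on (integrableOn_const (measure_lt_top μ _).ne)
                  hintg.integrableOn measurableSet_ball fun x hx => ?_
                rw [Real.exp_le_exp, hA' x y]
                have hd : dist x y < ε := Metric.mem_ball.mp hx
                have hl := hLip n y x
                have hdc : dist y x = dist x y := dist_comm y x
                nlinarith
            _ ≤ ∫ x, Real.exp (βs n * A (x, y) + φs n x + ψs n y) ∂μ :=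
                setIntegral_le_integral hintg
                  (Eventually.of_forall fun x => (Real.exp_pos _).le)
        have h7 : Real.exp (φs n y + ψs n y - 2 * (βs n * ε)) ≤ m⁻¹ := by
          rw [← one_div, le_div_iff₀ hmpos]; exact h5
        have h6 : φs n y + ψs n y - 2 * (βs n * ε) ≤ -Real.log m := by
          calc φs n y + ψs n y - 2 * (βs n * ε)
              = Real.log (Real.exp (φs n y + ψs n y - 2 * (βs n * ε))) :=
                (Real.log_exp _).symm
            _ ≤ Real.log m⁻¹ := Real.log_le_log (Real.exp_pos _) h7
            _ = -Real.log m := Real.log_inv m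
        rw [← add_div, div_le_iff₀ hb]
        have hc2 : (-Real.log m) / βs n * βs n = -Real.log m :=
          div_mul_cancel₀ _ hb.ne'
        nlinarith
      have hlim : Tendsto (fun n => 2 * ε + (-Real.log m) / βs n) atTop (nhds (2 * ε)) := by
        have h0 : Tendsto (fun n => (-Real.log m) / βs n) atTop (nhds 0) :=
          Tendsto.div_atTop tendsto_const_nhds hβtop
        simpa using tendsto_const_nhds.add h0
      exact le_of_tendsto_of_tendsto' ((hφpt y).add (hψpt y)) hlim bound
    by_contra hcon
    push_neg at hcon
    have := key ((φ y + ψ y) / 4) (by linarith)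
    linarith
  have hψφ : ∀ y, ψ y = -φ y := fun y => by have h1 := hge y; have h2 := hle y; linarith
  have hφcont : Continuous φ :=
    hφ.continuous (Frequently.of_forall fun n => (hφc n).div_const _)
  have hψcont : Continuous ψ :=
    hψ.continuous (Frequently.of_forall fun n => (hψc n).div_const _)
  have prodPlan : IsPlan μ ν (μ.prod ν) := by
    refine ⟨inferInstance, ?_, ?_⟩
    · rw [Measure.map_fst_prod]; simp
    · rw [Measure.map_snd_prod]; simp
  haveI : Nonempty {π : Measure (X × X) // IsPlan μ ν π} := ⟨⟨μ.prod ν, prodPlan⟩⟩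
  -- upper bound
  have hub : ∫ x, φ x ∂μ - ∫ x, φ x ∂ν ≤ transportCost μ ν c := by
    unfold transportCost
    refine le_ciInf fun π => ?_
    obtain ⟨πm, hπ⟩ := π
    haveI := hπ.1
    have hmf : ∫ p : X × X, φ p.1 ∂πm = ∫ x, φ x ∂μ := by
      rw [← hπ.2.1, integral_map measurable_fst.aemeasurable hφcont.aestronglyMeasurable]
    have hms : ∫ p : X × X, φ p.2 ∂πm = ∫ x, φ x ∂ν := by
      rw [← hπ.2.2, integral_map measurable_snd.aemeasurable hφcont.aestronglyMeasurable]
    have hint1 : Integrable (fun p : X × X => φ p.1) πm :=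
      contInt πm (hφcont.comp continuous_fst)
    have hint2 : Integrable (fun p : X × X => φ p.2) πm :=
      contInt πm (hφcont.comp continuous_snd)
    calc ∫ x, φ x ∂μ - ∫ x, φ x ∂ν
        = ∫ p : X × X, (φ p.1 - φ p.2) ∂πm := by
          rw [integral_sub hint1 hint2, hmf, hms]
      _ ≤ ∫ p, c p ∂πm := by
          have hcc : Continuous c := by rw [hc]; exact continuous_fst.dist continuous_snd
          refine integral_mono (hint1.sub hint2) (contInt πm hcc) fun p => ?_
          rw [hcP]
          exact (le_abs_self _).trans (part1 p.1 p.2)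
  -- lower bound : the entropic plans
  have measE : ∀ n, Measurable (fun p : X × X =>
      Real.exp (βs n * A p + φs n p.1 + ψs n p.2)) := fun n => (contE n).measurable
  set dens : ℕ → X × X → ℝ≥0 := fun n p =>
    (Real.exp (βs n * A p + φs n p.1 + ψs n p.2)).toNNReal with hdens
  have measdens : ∀ n, Measurable (dens n) := fun n => (measE n).real_toNNReal
  set πs : ℕ → Measure (X × X) := fun n =>
    (μ.prod ν).withDensity (fun p => (dens n p : ℝ≥0∞)) with hπs
  have hbridge : ∀ n (p : X × X), ((dens n p : ℝ≥0∞))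
      = ENNReal.ofReal (Real.exp (βs n * A p + φs n p.1 + ψs n p.2)) := fun n p => rfl
  have hmarg1 : ∀ n, (πs n).map Prod.fst = μ := by
    intro n
    refine Measure.ext fun s hs => ?_
    rw [Measure.map_apply measurable_fst hs, hπs]
    rw [withDensity_apply _ (measurable_fst hs), ← Set.prod_univ, ← Measure.prod_restrict,
      Measure.restrict_univ]
    rw [MeasureTheory.lintegral_prod _ ((measdens n).coe_nnreal_ennreal.aemeasurable)]
    have inner : ∀ x : X, ∫⁻ y, (dens n (x, y) : ℝ≥0∞) ∂ν = 1 := by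
      intro x
      simp only [hbridge]
      rw [← ofReal_integral_eq_lintegral_ofReal (contInt ν (contEy n x))
        (Eventually.of_forall fun y => (Real.exp_pos _).le), h2 n x, ENNReal.ofReal_one]
    simp only [inner]
    simp
  have hmarg2 : ∀ n, (πs n).map Prod.snd = ν := by
    intro n
    refine Measure.ext fun s hs => ?_
    rw [Measure.map_apply measurable_snd hs, hπs]
    rw [withDensity_apply _ (measurable_snd hs), ← Set.univ_prod, ← Measure.prod_restrict,
      Measure.restrict_univ]
    rw [MeasureTheory.lintegral_prod_symm _ ((measdens n).coe_nnreal_ennreal.aemeasurable)]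
    have inner : ∀ y : X, ∫⁻ x, (dens n (x, y) : ℝ≥0∞) ∂μ = 1 := by
      intro y
      simp only [hbridge]
      rw [← ofReal_integral_eq_lintegral_ofReal (contInt μ (contEx n y))
        (Eventually.of_forall fun x => (Real.exp_pos _).le), h1 n y, ENNReal.ofReal_one]
    simp only [inner]
    simp
  have hprob : ∀ n, IsProbabilityMeasure (πs n) := by
    intro n
    constructor
    have huniv : πs n Set.univ = ((πs n).map Prod.fst) Set.univ := by
      rw [Measure.map_apply measurable_fst MeasurableSet.univ, Set.preimage_univ]
    rw [huniv, hmarg1 n]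
    exact measure_univ
  have hplan : ∀ n, IsPlan μ ν (πs n) := fun n => ⟨hprob n, hmarg1 n, hmarg2 n⟩
  have hInt : ∀ n (g : X × X → ℝ), ∫ p, g p ∂(πs n)
      = ∫ p, Real.exp (βs n * A p + φs n p.1 + ψs n p.2) * g p ∂(μ.prod ν) := by
    intro n g
    rw [hπs, integral_withDensity_eq_integral_smul (measdens n)]
    congr 1; funext p
    rw [NNReal.smul_def, Real.coe_toNNReal _ (Real.exp_pos _).le, smul_eq_mul]
  have hEint : ∀ n, ∫ p, Real.exp (βs n * A p + φs n p.1 + ψs n p.2) ∂(μ.prod ν) = 1 := by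
    intro n
    rw [integral_prod _ (contInt (μ.prod ν) (contE n))]
    have : ∀ x : X, ∫ y, Real.exp (βs n * A (x, y) + φs n x + ψs n y) ∂ν = 1 := h2 n
    simp only [this]
    simp
  have hent : ∀ n, 0 ≤ ∫ p, (βs n * A p + φs n p.1 + ψs n p.2) ∂(πs n) := by
    intro n
    rw [hInt n]
    have contL : Continuous (fun p : X × X => βs n * A p + φs n p.1 + ψs n p.2) :=
      ((continuous_const.mul contA).add ((hφc n).comp continuous_fst)).add
        ((hψc n).comp continuous_snd)
    have key : ∫ p, (Real.exp (βs n * A p + φs n p.1 + ψs n p.2) - 1) ∂(μ.prod ν)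
        ≤ ∫ p, Real.exp (βs n * A p + φs n p.1 + ψs n p.2)
            * (βs n * A p + φs n p.1 + ψs n p.2) ∂(μ.prod ν) := by
      refine integral_mono ((contInt _ (contE n)).sub (integrable_const 1))
        (contInt _ ((contE n).mul contL)) fun p => ?_
      set L := βs n * A p + φs n p.1 + ψs n p.2 with hL
      have ha := Real.add_one_le_exp (-L)
      have hb2 : Real.exp (-L) * Real.exp L = 1 := by rw [← Real.exp_add]; simp
      nlinarith [Real.exp_pos L, mul_le_mul_of_nonneg_right ha (Real.exp_pos L).le]
    have hzero : ∫ p, (Real.exp (βs n * A p + φs n p.1 + ψs n p.2) - 1) ∂(μ.prod ν) = 0 := by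
      rw [integral_sub (contInt _ (contE n)) (integrable_const 1), hEint n]
      simp
    linarith
  have hφint : ∀ n, ∫ p : X × X, φs n p.1 ∂(πs n) = ∫ x, φs n x ∂μ := by
    intro n
    rw [← hmarg1 n, integral_map measurable_fst.aemeasurable (hφc n).aestronglyMeasurable]
  have hψint : ∀ n, ∫ p : X × X, ψs n p.2 ∂(πs n) = ∫ y, ψs n y ∂ν := by
    intro n
    rw [← hmarg2 n, integral_map measurable_snd.aemeasurable (hψc n).aestronglyMeasurable]
  have hcost : ∀ n, ∫ p, c p ∂(πs n)
      ≤ (∫ x, φs n x ∂μ) / βs n + (∫ y, ψs n y ∂ν) / βs n := by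
    intro n
    haveI := hprob n
    have hb := hβpos n
    have hiA : Integrable A (πs n) := contInt _ contA
    have hiφ : Integrable (fun p : X × X => φs n p.1) (πs n) :=
      contInt _ ((hφc n).comp continuous_fst)
    have hiψ : Integrable (fun p : X × X => ψs n p.2) (πs n) :=
      contInt _ ((hψc n).comp continuous_snd)
    have hsplit : ∫ p, (βs n * A p + φs n p.1 + ψs n p.2) ∂(πs n)
        = βs n * ∫ p, A p ∂(πs n) + ∫ x, φs n x ∂μ + ∫ y, ψs n y ∂ν := by
      have e1 : ∫ p, (βs n * A p + φs n p.1 + ψs n p.2) ∂(πs n)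
          = ∫ p, (βs n * A p + φs n p.1) ∂(πs n) + ∫ p : X × X, ψs n p.2 ∂(πs n) :=
        integral_add ((hiA.const_mul _).add hiφ) hiψ
      have e2 : ∫ p, (βs n * A p + φs n p.1) ∂(πs n)
          = ∫ p, βs n * A p ∂(πs n) + ∫ p : X × X, φs n p.1 ∂(πs n) :=
        integral_add (hiA.const_mul _) hiφ
      rw [e1, e2, integral_const_mul, hφint n, hψint n]
    have hAc : ∫ p, A p ∂(πs n) = - ∫ p, c p ∂(πs n) := by
      simp only [hA]
      exact integral_neg _
    have h0 := hent n
    rw [hsplit, hAc] at h0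
    rw [← add_div, le_div_iff₀ hb]
    nlinarith
  have hbdd : BddBelow (Set.range fun π : {π : Measure (X × X) // IsPlan μ ν π} =>
      ∫ p, c p ∂(π.1)) := by
    refine ⟨0, fun r hr => ?_⟩
    obtain ⟨π, rfl⟩ := hr
    exact integral_nonneg fun p => by rw [hcP]; exact dist_nonneg
  have htcle : ∀ n, transportCost μ ν c ≤ ∫ p, c p ∂(πs n) := by
    intro n
    exact ciInf_le hbdd ⟨πs n, hplan n⟩
  have hφlim : Tendsto (fun n => (∫ x, φs n x ∂μ) / βs n) atTop (nhds (∫ x, φ x ∂μ)) := by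
    have heq : ∀ n, (∫ x, φs n x ∂μ) / βs n = ∫ x, φs n x / βs n ∂μ :=
      fun n => (integral_div _ _).symm
    simp only [heq]
    exact tendstoIntegralOfTU μ (fun n => (contInt μ (hφc n)).div_const _)
      (contInt μ hφcont) hφ
  have hψlim : Tendsto (fun n => (∫ y, ψs n y ∂ν) / βs n) atTop (nhds (∫ y, ψ y ∂ν)) := by
    have heq : ∀ n, (∫ y, ψs n y ∂ν) / βs n = ∫ y, ψs n y / βs n ∂ν :=
      fun n => (integral_div _ _).symm
    simp only [heq]
    exact tendstoIntegralOfTU ν (fun n => (contInt ν (hψc n)).div_const _)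
      (contInt ν hψcont) hψ
  have hψval : ∫ y, ψ y ∂ν = - ∫ y, φ y ∂ν := by
    calc ∫ y, ψ y ∂ν = ∫ y, -φ y ∂ν := by
          congr 1
          funext y
          exact hψφ y
      _ = - ∫ y, φ y ∂ν := integral_neg _
  have hlb : transportCost μ ν c ≤ ∫ x, φ x ∂μ - ∫ x, φ x ∂ν := by
    have hlim := hφlim.add hψlim
    rw [hψval] at hlim
    have heq2 : (∫ x, φ x ∂μ) + -∫ x, φ x ∂ν = ∫ x, φ x ∂μ - ∫ x, φ x ∂ν := by ring
    rw [heq2] at hlim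
    exact ge_of_tendsto hlim (Eventually.of_forall fun n => (htcle n).trans (hcost n))
  exact ⟨part1, le_antisymm hub hlb⟩
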